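/- For every temperature T > 0 and every cost function C : 𝒱 → ℝ, the Gibbs distribution π_T is the unique stationary probability distribution of the chain: if π : 𝒱 → [0, 1] satisfies Σ_{S ∈ 𝒱} π(S) = 1 and Σ_{S ∈ 𝒱} π(S)·P_T(S, S') = π(S') for all S' ∈ 𝒱, then π = π_T. -/

import Mathlib

open Finset

set_option linter.unusedSectionVars false
set_option linter.unusedVariables false

variable {V : Type*} [Fintype V] [DecidableEq V]

/-- The collection of sets obtained from `S` by adding one new vertex. -/
def N1 (S : Finset V) : Finset (Finset V) := Sᶜ.image fun x => insert x S

/-- The collection of sets obtained from `S` by removing one vertex. -/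
def N2 (S : Finset V) : Finset (Finset V) := S.image fun x => S.erase x

/-- The collection of sets obtained from `S` by swapping one vertex of `S`
with one vertex outside `S`. -/
def N3 (S : Finset V) : Finset (Finset V) :=
  (Sᶜ ×ˢ S).image fun p => (insert p.1 S).erase p.2

/-- Off-diagonal transition probabilities of the Metropolis chain. -/
noncomputable def Poff (C : Finset V → ℝ) (T : ℝ) (S S' : Finset V) : ℝ :=
  if S' ∈ N1 S ∪ N2 S then
    (2 / (3 * (Fintype.card V : ℝ))) * min (Real.exp ((C S - C S') / T)) 1
  else if S' ∈ N3 S then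
    (1 / (3 * (S.card : ℝ) * ((Fintype.card V : ℝ) - (S.card : ℝ)))) *
      min (Real.exp ((C S - C S') / T)) 1
  else 0

/-- The transition matrix `P_T` of the Metropolis chain: off the diagonal it is
given by `Poff`, and the diagonal entry is `1` minus the sum of the off-diagonal
entries in the row. -/
noncomputable def Ptrans (C : Finset V → ℝ) (T : ℝ) (S S' : Finset V) : ℝ :=
  if S' = S then 1 - ∑ S'' ∈ univ.erase S, Poff C T S S''
  else Poff C T S S'

/-- The Gibbs distribution at temperature `T` for the cost function `C`. -/
noncomputable def gibbs (C : Finset V → ℝ) (T : ℝ) (S : Finset V) : ℝ :=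
  Real.exp (-C S / T) / ∑ S₁ : Finset V, Real.exp (-C S₁ / T)

lemma mem_N1 {S S' : Finset V} : S' ∈ N1 S ↔ ∃ x, x ∉ S ∧ S' = insert x S := by
  simp [N1, eq_comm]

lemma mem_N2 {S S' : Finset V} : S' ∈ N2 S ↔ ∃ x, x ∈ S ∧ S' = S.erase x := by
  simp [N2, eq_comm]

lemma mem_N3 {S S' : Finset V} :
    S' ∈ N3 S ↔ ∃ x x', x ∉ S ∧ x' ∈ S ∧ S' = (insert x S).erase x' := by
  simp only [N3, mem_image, mem_product, mem_compl, Prod.exists]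
  constructor
  · rintro ⟨a, b, ⟨h1, h2⟩, h3⟩; exact ⟨a, b, h1, h2, h3.symm⟩
  · rintro ⟨a, b, h1, h2, h3⟩; exact ⟨a, b, ⟨h1, h2⟩, h3.symm⟩

lemma card_mem_N1 {S S' : Finset V} (h : S' ∈ N1 S) : S'.card = S.card + 1 := by
  obtain ⟨x, hx, rfl⟩ := mem_N1.1 h
  exact card_insert_of_notMem hx

lemma card_mem_N2 {S S' : Finset V} (h : S' ∈ N2 S) : S'.card + 1 = S.card := by
  obtain ⟨x, hx, rfl⟩ := mem_N2.1 h
  rw [card_erase_of_mem hx]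
  exact Nat.succ_pred_eq_of_pos (card_pos.2 ⟨x, hx⟩)

lemma card_mem_N3 {S S' : Finset V} (h : S' ∈ N3 S) : S'.card = S.card := by
  obtain ⟨x, x', hx, hx', rfl⟩ := mem_N3.1 h
  rw [card_erase_of_mem (mem_insert_of_mem hx'), card_insert_of_notMem hx]
  omega

lemma N1_symm {S S' : Finset V} : S' ∈ N1 S ↔ S ∈ N2 S' := by
  constructor
  · rintro h
    obtain ⟨x, hx, rfl⟩ := mem_N1.1 h
    exact mem_N2.2 ⟨x, mem_insert_self _ _, (erase_insert hx).symm⟩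
  · rintro h
    obtain ⟨x, hx, rfl⟩ := mem_N2.1 h
    exact mem_N1.2 ⟨x, notMem_erase _ _, (insert_erase hx).symm⟩

lemma N3_symm {S S' : Finset V} (h : S' ∈ N3 S) : S ∈ N3 S' := by
  obtain ⟨x, x', hx, hx', rfl⟩ := mem_N3.1 h
  have hxx' : x ≠ x' := fun he => hx (he ▸ hx')
  refine mem_N3.2 ⟨x', x, notMem_erase _ _, mem_erase.2 ⟨hxx', mem_insert_self _ _⟩, ?_⟩
  rw [insert_erase (mem_insert_of_mem hx'), erase_insert hx]

lemma card_pos_of_mem_N3 {S S' : Finset V} (h : S' ∈ N3 S) :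
    1 ≤ S.card ∧ S.card < Fintype.card V := by
  obtain ⟨x, x', hx, hx', rfl⟩ := mem_N3.1 h
  refine ⟨card_pos.2 ⟨x', hx'⟩, ?_⟩
  exact card_lt_card (ssubset_univ_iff.2 fun he => hx (he ▸ mem_univ x))

lemma self_not_mem_N1 (S : Finset V) : S ∉ N1 S := fun h => by
  have := card_mem_N1 h; omega

lemma self_not_mem_N2 (S : Finset V) : S ∉ N2 S := fun h => by
  have := card_mem_N2 h; omega

lemma self_not_mem_N3 (S : Finset V) : S ∉ N3 S := fun h => by
  obtain ⟨x, x', hx, hx', he⟩ := mem_N3.1 h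
  have hxx' : x ≠ x' := fun hh => hx (hh ▸ hx')
  exact hx (by rw [he] at hx ⊢; exact absurd (mem_erase.2 ⟨hxx', mem_insert_self _ _⟩) hx)

lemma N3_disjoint {S S' : Finset V} (h : S' ∈ N3 S) : S' ∉ N1 S ∪ N2 S := by
  intro h'
  have h3 := card_mem_N3 h
  rcases mem_union.1 h' with h1 | h2
  · have := card_mem_N1 h1; omega
  · have := card_mem_N2 h2; omega

lemma min_exp_pos (a : ℝ) : 0 < min (Real.exp a) 1 :=
  lt_min (Real.exp_pos a) one_pos

lemma Poff_nonneg (C : Finset V → ℝ) (T : ℝ) (S S' : Finset V) :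
    0 ≤ Poff C T S S' := by
  unfold Poff
  split_ifs with h1 h2
  · positivity
  · apply mul_nonneg _ (min_exp_pos _).le
    obtain ⟨h1', h2'⟩ := card_pos_of_mem_N3 h2
    have hlt : (S.card : ℝ) < Fintype.card V := by exact_mod_cast h2'
    have h1'' : (0:ℝ) < S.card := by exact_mod_cast h1'
    have hp : (0:ℝ) < 3 * (S.card : ℝ) * ((Fintype.card V : ℝ) - S.card) := by nlinarith
    exact (div_pos one_pos hp).le
  · exact le_refl 0

lemma Poff_self (C : Finset V → ℝ) (T : ℝ) (S : Finset V) : Poff C T S S = 0 := by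
  unfold Poff
  rw [if_neg, if_neg (self_not_mem_N3 S)]
  rw [mem_union]
  push_neg
  exact ⟨self_not_mem_N1 S, self_not_mem_N2 S⟩

lemma sum_Poff_le_one (hn : 1 ≤ Fintype.card V) (C : Finset V → ℝ) (T : ℝ) (S : Finset V) :
    ∑ S'' ∈ univ.erase S, Poff C T S S'' ≤ 1 := by
  classical
  set n := Fintype.card V
  set k := S.card with hk
  have hkn : k ≤ n := card_le_univ S
  have hcoef1 : (0:ℝ) ≤ 2 / (3 * n) := by positivity
  set c : ℝ := 1 / (3 * (k : ℝ) * ((n : ℝ) - k)) with hc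
  have hcnn : 0 ≤ c := by
    rcases eq_or_lt_of_le hkn with h | h
    · simp [hc, h]
    · rcases Nat.eq_zero_or_pos k with h0 | h0
      · simp [hc, h0]
      · have ha : (k:ℝ) < n := by exact_mod_cast h
        have hb : (0:ℝ) < k := by exact_mod_cast h0
        have hp : (0:ℝ) < 3 * (k:ℝ) * ((n:ℝ) - k) := by nlinarith
        rw [hc]
        exact (div_pos one_pos hp).le
  have hbound : ∀ S'' : Finset V, Poff C T S S'' ≤
      (if S'' ∈ N1 S ∪ N2 S then 2/(3*(n:ℝ)) else 0) + (if S'' ∈ N3 S then c else 0) := by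
    intro S''
    unfold Poff
    split_ifs with h1 h2 h3
    · calc 2/(3*(n:ℝ)) * min (Real.exp ((C S - C S'')/T)) 1 ≤ 2/(3*(n:ℝ)) * 1 :=
            mul_le_mul_of_nonneg_left (min_le_right _ _) hcoef1
        _ ≤ 2/(3*(n:ℝ)) + c := by linarith
    · calc 2/(3*(n:ℝ)) * min (Real.exp ((C S - C S'')/T)) 1 ≤ 2/(3*(n:ℝ)) * 1 :=
            mul_le_mul_of_nonneg_left (min_le_right _ _) hcoef1
        _ ≤ 2/(3*(n:ℝ)) + 0 := by linarith
    · calc c * min (Real.exp ((C S - C S'')/T)) 1 ≤ c * 1 :=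
            mul_le_mul_of_nonneg_left (min_le_right _ _) hcnn
        _ ≤ 0 + c := by linarith
    · linarith
  calc ∑ S'' ∈ univ.erase S, Poff C T S S''
      ≤ ∑ S'' ∈ univ.erase S, ((if S'' ∈ N1 S ∪ N2 S then 2/(3*(n:ℝ)) else 0)
          + (if S'' ∈ N3 S then c else 0)) := sum_le_sum fun i _ => hbound i
    _ ≤ ∑ S'' : Finset V, ((if S'' ∈ N1 S ∪ N2 S then 2/(3*(n:ℝ)) else 0)
          + (if S'' ∈ N3 S then c else 0)) := by
        apply sum_le_sum_of_subset_of_nonneg (erase_subset _ _)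
        intro i _ _
        have : (0:ℝ) ≤ if i ∈ N1 S ∪ N2 S then 2/(3*(n:ℝ)) else 0 := by
          split_ifs; exacts [hcoef1, le_refl 0]
        have h2 : (0:ℝ) ≤ if i ∈ N3 S then c else 0 := by
          split_ifs; exacts [hcnn, le_refl 0]
        linarith
    _ = ((N1 S ∪ N2 S).card : ℝ) * (2/(3*(n:ℝ))) + ((N3 S).card : ℝ) * c := by
        rw [sum_add_distrib, sum_ite_mem, sum_ite_mem, univ_inter, univ_inter,
          sum_const, sum_const, nsmul_eq_mul, nsmul_eq_mul]
    _ ≤ 1 := by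
        have h12 : ((N1 S ∪ N2 S).card : ℝ) ≤ n := by
          have := card_union_le (N1 S) (N2 S)
          have h1 : (N1 S).card ≤ n - k := le_trans card_image_le (by rw [card_compl])
          have h2 : (N2 S).card ≤ k := card_image_le
          have : (N1 S ∪ N2 S).card ≤ n := by omega
          exact_mod_cast this
        have h3 : ((N3 S).card : ℝ) * c ≤ 1/3 := by
          rcases Nat.eq_zero_or_pos k with h0 | h0
          · have : N3 S = ∅ := by
              rw [eq_empty_iff_forall_notMem]
              intro x hx
              have := (card_pos_of_mem_N3 hx).1; omega
            simp [this]
          rcases eq_or_lt_of_le hkn with h | h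
          · have : N3 S = ∅ := by
              rw [eq_empty_iff_forall_notMem]
              intro x hx
              have := (card_pos_of_mem_N3 hx).2; omega
            simp [this]
          · have hcard : ((N3 S).card : ℝ) ≤ (n - k : ℕ) * k := by
              have := le_trans (card_image_le (s := Sᶜ ×ˢ S)
                (f := fun p => (insert p.1 S).erase p.2)) (le_of_eq (card_product _ _))
              have h4 : (N3 S).card ≤ (n - k) * k := by
                rw [card_compl] at this; exact this
              exact_mod_cast h4
            have hkr : (0:ℝ) < k := by exact_mod_cast h0
            have hnk : (0:ℝ) < (n:ℝ) - k := by
              have : (k:ℝ) < n := by exact_mod_cast h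
              linarith
            have hcast : ((n - k : ℕ) : ℝ) = (n:ℝ) - k := by
              rw [Nat.cast_sub hkn]
            calc ((N3 S).card : ℝ) * c ≤ (((n-k:ℕ):ℝ) * k) * c := by
                  apply mul_le_mul_of_nonneg_right _ hcnn
                  exact_mod_cast hcard
              _ = 1/3 := by rw [hcast, hc]; field_simp
        have h4 : ((N1 S ∪ N2 S).card : ℝ) * (2/(3*(n:ℝ))) ≤ 2/3 := by
          have hnr : (0:ℝ) < n := by exact_mod_cast hn
          calc ((N1 S ∪ N2 S).card : ℝ) * (2/(3*(n:ℝ))) ≤ (n:ℝ) * (2/(3*(n:ℝ))) :=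
                mul_le_mul_of_nonneg_right h12 hcoef1
            _ = 2/3 := by field_simp
        linarith

lemma Ptrans_nonneg (hn : 1 ≤ Fintype.card V) (C : Finset V → ℝ) (T : ℝ) (S S' : Finset V) :
    0 ≤ Ptrans C T S S' := by
  unfold Ptrans
  split_ifs with h
  · linarith [sum_Poff_le_one hn C T S]
  · exact Poff_nonneg C T S S'

lemma Ptrans_row_sum (C : Finset V → ℝ) (T : ℝ) (S : Finset V) :
    ∑ S' : Finset V, Ptrans C T S S' = 1 := by
  rw [← Finset.add_sum_erase _ _ (mem_univ S)]
  have h1 : Ptrans C T S S = 1 - ∑ S'' ∈ univ.erase S, Poff C T S S'' := if_pos rfl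
  have h2 : ∑ S' ∈ univ.erase S, Ptrans C T S S' = ∑ S' ∈ univ.erase S, Poff C T S S' := by
    apply sum_congr rfl
    intro S' hS'
    exact if_neg (ne_of_mem_erase hS')
  rw [h1, h2]
  ring

lemma metropolis (T a b : ℝ) :
    Real.exp (-a / T) * min (Real.exp ((a - b) / T)) 1
      = Real.exp (-b / T) * min (Real.exp ((b - a) / T)) 1 := by
  rw [mul_min_of_nonneg _ _ (Real.exp_pos _).le, mul_min_of_nonneg _ _ (Real.exp_pos _).le,
    ← Real.exp_add, ← Real.exp_add, mul_one, mul_one, ← add_div, ← add_div]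
  have h1 : -a + (a - b) = -b := by ring
  have h2 : -b + (b - a) = -a := by ring
  rw [h1, h2, min_comm]

lemma detailed_balance (C : Finset V → ℝ) (T : ℝ) (S S' : Finset V) :
    Real.exp (-C S / T) * Poff C T S S' = Real.exp (-C S' / T) * Poff C T S' S := by
  unfold Poff
  by_cases h1 : S' ∈ N1 S ∪ N2 S
  · have h1' : S ∈ N1 S' ∪ N2 S' := by
      rcases mem_union.1 h1 with h | h
      · exact mem_union.1 (mem_union_left _ (N1_symm.1 h)) |>.elim
          (fun hh => mem_union_right _ (by exact N1_symm.1 h)) (fun hh => mem_union_right _ hh)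
      · exact mem_union_left _ (N1_symm.2 h)
    rw [if_pos h1, if_pos h1']
    have := metropolis T (C S) (C S')
    linear_combination (2 / (3 * (Fintype.card V : ℝ))) * this
  · by_cases h2 : S' ∈ N3 S
    · have h2' : S ∈ N3 S' := N3_symm h2
      have h1'' : S ∉ N1 S' ∪ N2 S' := by
        intro hh
        have hcc := card_mem_N3 h2
        rcases mem_union.1 hh with h | h
        · have := card_mem_N1 h; omega
        · have := card_mem_N2 h; omega
      rw [if_neg h1, if_pos h2, if_neg h1'', if_pos h2', card_mem_N3 h2]
      have := metropolis T (C S) (C S')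
      linear_combination (1 / (3 * (S.card:ℝ) * ((Fintype.card V:ℝ) - S.card))) * this
    · have h2' : S ∉ N3 S' := fun hh => h2 (N3_symm hh)
      have h1'' : S ∉ N1 S' ∪ N2 S' := by
        intro hh
        apply h1
        rcases mem_union.1 hh with h | h
        · exact mem_union_right _ (N1_symm.1 h)
        · exact mem_union_left _ (N1_symm.2 h)
      rw [if_neg h1, if_neg h2, if_neg h1'', if_neg h2']
      ring

lemma gibbs_pos (C : Finset V → ℝ) (T : ℝ) (S : Finset V) : 0 < gibbs C T S :=
  div_pos (Real.exp_pos _) (sum_pos (fun _ _ => Real.exp_pos _) univ_nonempty)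

lemma gibbs_sum (C : Finset V → ℝ) (T : ℝ) : ∑ S : Finset V, gibbs C T S = 1 := by
  unfold gibbs
  rw [← sum_div]
  exact div_self (sum_pos (fun _ _ => Real.exp_pos _) univ_nonempty).ne'

lemma gibbs_db (C : Finset V → ℝ) (T : ℝ) (S S' : Finset V) :
    gibbs C T S * Ptrans C T S S' = gibbs C T S' * Ptrans C T S' S := by
  by_cases h : S' = S
  · subst h; rfl
  · unfold Ptrans
    rw [if_neg h, if_neg (Ne.symm h)]
    unfold gibbs
    rw [div_mul_eq_mul_div, div_mul_eq_mul_div, detailed_balance]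

lemma Poff_pos_of_mem (hn : 1 ≤ Fintype.card V) (C : Finset V → ℝ) (T : ℝ)
    {S S' : Finset V} (h : S' ∈ N1 S ∪ N2 S) : 0 < Poff C T S S' := by
  unfold Poff
  rw [if_pos h]
  have hnr : (0:ℝ) < Fintype.card V := by exact_mod_cast hn
  exact mul_pos (by positivity) (min_exp_pos _)

/-- The Gibbs distribution is the unique stationary probability
distribution of the chain `P_T`. -/
theorem gibbs_unique_stationary (hn : 1 ≤ Fintype.card V) (C : Finset V → ℝ) (T : ℝ)
    (hT : 0 < T) (π : Finset V → ℝ)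
    (hrange : ∀ S : Finset V, π S ∈ Set.Icc (0 : ℝ) 1)
    (hsum : ∑ S : Finset V, π S = 1)
    (hstat : ∀ S' : Finset V, ∑ S : Finset V, π S * Ptrans C T S S' = π S') :
    π = gibbs C T := by
  classical
  have hg : ∀ S, 0 < gibbs C T S := gibbs_pos C T
  set f : Finset V → ℝ := fun S => π S / gibbs C T S with hfd
  have hπg : ∀ S, π S = f S * gibbs C T S := fun S => (div_mul_cancel₀ _ (hg S).ne').symm
  have hf : ∀ S', f S' = ∑ S : Finset V, f S * Ptrans C T S' S := by
    intro S'
    have h1 : π S' = gibbs C T S' * ∑ S : Finset V, f S * Ptrans C T S' S := by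
      calc π S' = ∑ S : Finset V, π S * Ptrans C T S S' := (hstat S').symm
        _ = ∑ S : Finset V, f S * (gibbs C T S * Ptrans C T S S') := by
            apply sum_congr rfl; intro S _; rw [hπg S]; ring
        _ = ∑ S : Finset V, f S * (gibbs C T S' * Ptrans C T S' S) := by
            apply sum_congr rfl; intro S _; rw [gibbs_db]
        _ = gibbs C T S' * ∑ S : Finset V, f S * Ptrans C T S' S := by
            rw [mul_sum]; apply sum_congr rfl; intro S _; ring
    show π S' / gibbs C T S' = _
    rw [h1, mul_div_cancel_left₀ _ (hg S').ne']
  obtain ⟨S₀, -, hS₀⟩ := exists_max_image univ f univ_nonempty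
  set M := f S₀ with hM
  have hle : ∀ S, f S ≤ M := fun S => hS₀ S (mem_univ S)
  have closure : ∀ S, f S = M → ∀ S' ∈ N1 S ∪ N2 S, f S' = M := by
    intro S hS S' hS'
    have hzero : ∑ S₁ : Finset V, (M - f S₁) * Ptrans C T S S₁ = 0 := by
      calc ∑ S₁ : Finset V, (M - f S₁) * Ptrans C T S S₁
          = M * ∑ S₁ : Finset V, Ptrans C T S S₁
            - ∑ S₁ : Finset V, f S₁ * Ptrans C T S S₁ := by
            rw [mul_sum, ← sum_sub_distrib]; apply sum_congr rfl; intros; ring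
        _ = M * 1 - f S := by rw [Ptrans_row_sum, ← hf S]
        _ = 0 := by rw [hS]; ring
    have hnn : ∀ S₁ ∈ (univ : Finset (Finset V)), 0 ≤ (M - f S₁) * Ptrans C T S S₁ :=
      fun S₁ _ => mul_nonneg (by linarith [hle S₁]) (Ptrans_nonneg hn C T S S₁)
    have hterm := (sum_eq_zero_iff_of_nonneg hnn).1 hzero S' (mem_univ S')
    have hne : S' ≠ S := by
      intro he
      subst he
      rcases mem_union.1 hS' with h | h
      · exact self_not_mem_N1 _ h
      · exact self_not_mem_N2 _ h
    have hpos : 0 < Ptrans C T S S' := by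
      unfold Ptrans
      rw [if_neg hne]
      exact Poff_pos_of_mem hn C T hS'
    have : M - f S' = 0 := (mul_eq_zero.1 hterm).resolve_right hpos.ne'
    linarith
  have hempty : f ∅ = M := by
    suffices h : ∀ S : Finset V, f S = M → f ∅ = M from h S₀ rfl
    intro S
    induction S using Finset.strongInduction with
    | _ S ih =>
      intro hS
      rcases S.eq_empty_or_nonempty with rfl | ⟨x, hx⟩
      · exact hS
      · exact ih (S.erase x) (erase_ssubset hx)
          (closure S hS _ (mem_union_right _ (mem_N2.2 ⟨x, hx, rfl⟩)))
  have hall : ∀ S : Finset V, f S = M := by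
    intro S
    induction S using Finset.induction with
    | empty => exact hempty
    | insert _ _ hx ih =>
      exact closure _ ih _ (mem_union_left _ (mem_N1.2 ⟨_, hx, rfl⟩))
  have hM1 : M = 1 := by
    have h1 : (1:ℝ) = M := by
      calc (1:ℝ) = ∑ S : Finset V, π S := hsum.symm
        _ = ∑ S : Finset V, M * gibbs C T S := by
            apply sum_congr rfl; intro S _; rw [hπg S, hall S]
        _ = M * ∑ S : Finset V, gibbs C T S := by rw [mul_sum]
        _ = M := by rw [gibbs_sum]; ring
    linarith
  funext S
  have hS := hπg S
  rw [hall S, hM1, one_mul] at hS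
  exact hS
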